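/- The function V₀, defined as the pointwise limit of 𝕄^N h as N→∞, satisfies the optimality equation: for every π=(π₀,…,π_M)∈S^M, V₀(π) = (𝕄V₀)(π) = min{ h(π), c(1−π₀) + (TV₀)(π) }. -/

import Mathlib

open MeasureTheory Finset Filter
open scoped ENNReal

noncomputable section

/-- The analytic data of the change-diagnosis problem: a σ-finite reference measure `m`
on the observation space, probability densities `f₀, …, f_M`, the geometric parameter
`p ∈ (0,1)`, the prior `ν` on the change index, the delay cost `c > 0` and the
terminal-decision costs `a_{ij}` (with `a_{ii} = 0`). -/
structure DiagSetup (E : Type*) [MeasurableSpace E] (M : ℕ) : Type _ where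
  /-- σ-finite reference measure -/
  m : Measure E
  hm : SigmaFinite m
  /-- `f 0` is the pre-change density, `f i.succ` the post-change densities -/
  f : Fin (M + 1) → E → ℝ
  hf_meas : ∀ i, Measurable (f i)
  hf_nonneg : ∀ i x, 0 ≤ f i x
  hf_int : ∀ i, ∫ x, f i x ∂m = 1
  p : ℝ
  hp : p ∈ Set.Ioo (0 : ℝ) 1
  ν : Fin M → ℝ
  hν : ∀ i, 0 < ν i
  hνsum : ∑ i, ν i = 1
  c : ℝ
  hc : 0 < c
  a : Fin (M + 1) → Fin M → ℝ
  ha : ∀ i j, 0 ≤ a i j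
  haii : ∀ i : Fin M, a i.succ i = 0
  hM : 1 ≤ M

namespace DiagSetup

variable {E : Type*} [MeasurableSpace E] {M : ℕ}

/-- `D_i(π, x)`:  `D₀(π,x) = (1-p)π₀f₀(x)` and `D_i(π,x) = (π_i + π₀ p ν_i) f_i(x)`. -/
def D (S : DiagSetup E M) (i : Fin (M + 1)) (π : Fin (M + 1) → ℝ) (x : E) : ℝ :=
  Fin.cases ((1 - S.p) * π 0 * S.f 0 x)
    (fun j => (π j.succ + π 0 * S.p * S.ν j) * S.f j.succ x) i

/-- `D(π, x) = Σ_{i=0}^M D_i(π, x)`. -/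
def Dsum (S : DiagSetup E M) (π : Fin (M + 1) → ℝ) (x : E) : ℝ :=
  ∑ i, S.D i π x

/-- The operator `T`:
`(Tg)(π) = ∫_E D(π,x) g(D₀(π,x)/D(π,x), …, D_M(π,x)/D(π,x)) m(dx)`,
with the integrand interpreted as `0` where `D(π,x) = 0`. -/
def T (S : DiagSetup E M) (g : (Fin (M + 1) → ℝ) → ℝ) (π : Fin (M + 1) → ℝ) : ℝ :=
  ∫ x, (if S.Dsum π x = 0 then 0
        else S.Dsum π x * g fun i => S.D i π x / S.Dsum π x) ∂S.m

/-- `h_j(π) = Σ_{i=0}^M π_i a_{ij}`. -/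
def hj (S : DiagSetup E M) (j : Fin M) (π : Fin (M + 1) → ℝ) : ℝ :=
  ∑ i : Fin (M + 1), π i * S.a i j

/-- `h(π) = min_{j∈{1,…,M}} h_j(π)`. -/
def hmin (S : DiagSetup E M) (π : Fin (M + 1) → ℝ) : ℝ :=
  ⨅ j : Fin M, S.hj j π

/-- The dynamic-programming operator `(𝕄g)(π) = min{h(π), c(1-π₀) + (Tg)(π)}`. -/
def Mop (S : DiagSetup E M) (g : (Fin (M + 1) → ℝ) → ℝ) (π : Fin (M + 1) → ℝ) : ℝ :=
  min (S.hmin π) (S.c * (1 - π 0) + S.T g π)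

/-- `V^N = 𝕄^N h`, the value functions of the truncated problems. -/
def V (S : DiagSetup E M) (N : ℕ) : (Fin (M + 1) → ℝ) → ℝ :=
  S.Mop^[N] S.hmin

end DiagSetup


namespace DiagSetup

variable {E : Type*} [MeasurableSpace E] {M : ℕ} (S : DiagSetup E M)

lemma D_zero (π : Fin (M+1) → ℝ) (x : E) : S.D 0 π x = (1 - S.p) * π 0 * S.f 0 x := rfl

lemma D_succ (j : Fin M) (π : Fin (M+1) → ℝ) (x : E) :
    S.D j.succ π x = (π j.succ + π 0 * S.p * S.ν j) * S.f j.succ x := by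
  simp [D]

lemma measurable_D (i : Fin (M+1)) :
    Measurable fun q : (Fin (M+1) → ℝ) × E => S.D i q.1 q.2 := by
  induction i using Fin.cases with
  | zero =>
    simp only [D_zero]
    exact (measurable_const.mul ((measurable_pi_apply 0).comp measurable_fst)).mul
      ((S.hf_meas 0).comp measurable_snd)
  | succ j =>
    simp only [D_succ]
    exact (((measurable_pi_apply j.succ).comp measurable_fst).add
      (by fun_prop : Measurable fun q : (Fin (M+1) → ℝ) × E => q.1 0 * S.p * S.ν j)).mul
      ((S.hf_meas j.succ).comp measurable_snd)

lemma measurable_Dsum : Measurable fun q : (Fin (M+1) → ℝ) × E => S.Dsum q.1 q.2 :=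
  Finset.measurable_sum _ fun i _ => S.measurable_D i

lemma D_nonneg {π : Fin (M+1) → ℝ} (hπ : π ∈ stdSimplex ℝ (Fin (M+1))) (i : Fin (M+1)) (x : E) :
    0 ≤ S.D i π x := by
  induction i using Fin.cases with
  | zero =>
    rw [D_zero]
    exact mul_nonneg (mul_nonneg (by linarith [S.hp.2]) (hπ.1 0)) (S.hf_nonneg 0 x)
  | succ j =>
    rw [D_succ]
    exact mul_nonneg (add_nonneg (hπ.1 j.succ)
      (mul_nonneg (mul_nonneg (hπ.1 0) S.hp.1.le) (S.hν j).le)) (S.hf_nonneg j.succ x)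

lemma Dsum_nonneg {π : Fin (M+1) → ℝ} (hπ : π ∈ stdSimplex ℝ (Fin (M+1))) (x : E) :
    0 ≤ S.Dsum π x :=
  Finset.sum_nonneg fun i _ => S.D_nonneg hπ i x

lemma ratio_mem {π : Fin (M+1) → ℝ} (hπ : π ∈ stdSimplex ℝ (Fin (M+1))) (x : E)
    (hx : S.Dsum π x ≠ 0) :
    (fun i => S.D i π x / S.Dsum π x) ∈ stdSimplex ℝ (Fin (M+1)) := by
  have hpos : 0 < S.Dsum π x := lt_of_le_of_ne (S.Dsum_nonneg hπ x) (Ne.symm hx)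
  refine ⟨fun i => div_nonneg (S.D_nonneg hπ i x) hpos.le, ?_⟩
  rw [← Finset.sum_div]
  exact div_self hx

lemma integrable_f (i : Fin (M+1)) : Integrable (S.f i) S.m := by
  by_contra h
  have h1 := S.hf_int i
  rw [integral_undef h] at h1
  norm_num at h1

lemma integrable_Dsum (π : Fin (M+1) → ℝ) : Integrable (fun x => S.Dsum π x) S.m := by
  unfold Dsum
  apply integrable_finset_sum
  intro i _
  induction i using Fin.cases with
  | zero => exact (S.integrable_f 0).const_mul _
  | succ j =>
    exact ((S.integrable_f j.succ).const_mul _).congr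
      (Filter.Eventually.of_forall fun x => (S.D_succ j π x).symm)

/-- A common upper bound for all the cost functions. -/
def Abnd : ℝ := ∑ i : Fin (M+1), ∑ j : Fin M, S.a i j

lemma Abnd_nonneg : 0 ≤ S.Abnd :=
  Finset.sum_nonneg fun i _ => Finset.sum_nonneg fun j _ => S.ha i j

lemma pi_le_one (_S : DiagSetup E M) {π : Fin (M+1) → ℝ}
    (hπ : π ∈ stdSimplex ℝ (Fin (M+1))) (i : Fin (M+1)) :
    π i ≤ 1 := by
  have := Finset.single_le_sum (f := π) (fun k _ => hπ.1 k) (Finset.mem_univ i)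
  rw [hπ.2] at this
  exact this

lemma hj_nonneg {π : Fin (M+1) → ℝ} (hπ : π ∈ stdSimplex ℝ (Fin (M+1))) (j : Fin M) :
    0 ≤ S.hj j π :=
  Finset.sum_nonneg fun i _ => mul_nonneg (hπ.1 i) (S.ha i j)

lemma hmin_nonneg {π : Fin (M+1) → ℝ} (hπ : π ∈ stdSimplex ℝ (Fin (M+1))) :
    0 ≤ S.hmin π := by
  have : Nonempty (Fin M) := ⟨⟨0, S.hM⟩⟩
  exact le_ciInf (S.hj_nonneg hπ)

lemma hmin_le_Abnd {π : Fin (M+1) → ℝ} (hπ : π ∈ stdSimplex ℝ (Fin (M+1))) :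
    S.hmin π ≤ S.Abnd := by
  have hj0 : (⟨0, S.hM⟩ : Fin M) = ⟨0, S.hM⟩ := rfl
  refine le_trans (ciInf_le (Set.finite_range _).bddBelow ⟨0, S.hM⟩) ?_
  refine Finset.sum_le_sum fun i _ => ?_
  calc π i * S.a i ⟨0, S.hM⟩ ≤ 1 * S.a i ⟨0, S.hM⟩ :=
        mul_le_mul_of_nonneg_right (S.pi_le_one hπ i) (S.ha i _)
    _ = S.a i ⟨0, S.hM⟩ := one_mul _
    _ ≤ ∑ j : Fin M, S.a i j :=
        Finset.single_le_sum (fun j _ => S.ha i j) (Finset.mem_univ _)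

lemma measurable_hmin : Measurable S.hmin :=
  Measurable.iInf fun j => Finset.measurable_sum _ fun i _ => (measurable_pi_apply i).mul_const _

lemma measurable_integrand_joint {g : (Fin (M+1) → ℝ) → ℝ} (hg : Measurable g) :
    Measurable fun q : (Fin (M+1) → ℝ) × E =>
      (if S.Dsum q.1 q.2 = 0 then 0
        else S.Dsum q.1 q.2 * g fun i => S.D i q.1 q.2 / S.Dsum q.1 q.2) :=
  Measurable.ite (S.measurable_Dsum (measurableSet_singleton 0)) measurable_const
    (S.measurable_Dsum.mul (hg.comp (measurable_pi_lambda _ fun i =>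
      (S.measurable_D i).div S.measurable_Dsum)))

lemma measurable_integrand {g : (Fin (M+1) → ℝ) → ℝ} (hg : Measurable g)
    (π : Fin (M+1) → ℝ) :
    Measurable fun x : E =>
      (if S.Dsum π x = 0 then 0
        else S.Dsum π x * g fun i => S.D i π x / S.Dsum π x) :=
  (S.measurable_integrand_joint hg).comp measurable_prodMk_left

lemma measurable_T {g : (Fin (M+1) → ℝ) → ℝ} (hg : Measurable g) : Measurable (S.T g) := by
  haveI := S.hm
  exact (S.measurable_integrand_joint hg).stronglyMeasurable.integral_prod_right'.measurable

lemma measurable_Mop {g : (Fin (M+1) → ℝ) → ℝ} (hg : Measurable g) : Measurable (S.Mop g) :=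
  S.measurable_hmin.min ((measurable_const.mul
    (measurable_const.sub (measurable_pi_apply 0))).add (S.measurable_T hg))

lemma measurable_V (N : ℕ) : Measurable (S.V N) := by
  induction N with
  | zero => exact S.measurable_hmin
  | succ N ih =>
    have : S.V (N+1) = S.Mop (S.V N) := by
      simp only [V, Function.iterate_succ_apply']
    rw [this]
    exact S.measurable_Mop ih

lemma T_nonneg {g : (Fin (M+1) → ℝ) → ℝ}
    (hg : ∀ ρ ∈ stdSimplex ℝ (Fin (M+1)), 0 ≤ g ρ)
    {π : Fin (M+1) → ℝ} (hπ : π ∈ stdSimplex ℝ (Fin (M+1))) : 0 ≤ S.T g π := by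
  refine integral_nonneg fun x => ?_
  simp only [Pi.zero_apply]
  split_ifs with h
  · exact le_refl 0
  · exact mul_nonneg (S.Dsum_nonneg hπ x) (hg _ (S.ratio_mem hπ x h))

lemma V_succ (N : ℕ) (π : Fin (M+1) → ℝ) :
    S.V (N+1) π = min (S.hmin π) (S.c * (1 - π 0) + S.T (S.V N) π) := by
  show S.Mop^[N+1] S.hmin π = _
  rw [Function.iterate_succ_apply']
  rfl

lemma V_bounds (N : ℕ) {π : Fin (M+1) → ℝ} (hπ : π ∈ stdSimplex ℝ (Fin (M+1))) :
    0 ≤ S.V N π ∧ S.V N π ≤ S.Abnd := by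
  induction N generalizing π hπ with
  | zero => exact ⟨S.hmin_nonneg hπ, S.hmin_le_Abnd hπ⟩
  | succ N ih =>
    rw [V_succ]
    constructor
    · refine le_min (S.hmin_nonneg hπ) (add_nonneg (mul_nonneg S.hc.le ?_) ?_)
      · linarith [S.pi_le_one hπ 0]
      · exact S.T_nonneg (fun ρ hρ => (ih hρ).1) hπ
    · exact (min_le_left _ _).trans (S.hmin_le_Abnd hπ)

end DiagSetup

/-- optimality equation: the limit value function `V₀ = lim_N 𝕄^N h`
satisfies `V₀(π) = (𝕄V₀)(π) = min{h(π), c(1-π₀) + (TV₀)(π)}` for every `π ∈ S^M`. -/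
theorem optimality_equation {E : Type*} [MeasurableSpace E] {M : ℕ}
    (S : DiagSetup E M) (V0 : (Fin (M + 1) → ℝ) → ℝ) (hV0_meas : Measurable V0)
    (hV0 : ∀ π ∈ stdSimplex ℝ (Fin (M + 1)),
      Tendsto (fun N => S.V N π) atTop (nhds (V0 π))) :
    ∀ π ∈ stdSimplex ℝ (Fin (M + 1)),
      V0 π = S.Mop V0 π ∧ V0 π = min (S.hmin π) (S.c * (1 - π 0) + S.T V0 π) := by
  intro π hπ
  haveI := S.hm
  have hT : Tendsto (fun N => S.T (S.V N) π) atTop (nhds (S.T V0 π)) := by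
    refine tendsto_integral_of_dominated_convergence (fun x => S.Abnd * S.Dsum π x)
      (fun N => (S.measurable_integrand (S.measurable_V N) π).aestronglyMeasurable)
      ((S.integrable_Dsum π).const_mul _) (fun N => Filter.Eventually.of_forall fun x => ?_)
      (Filter.Eventually.of_forall fun x => ?_)
    · by_cases h : S.Dsum π x = 0
      · simp [h]
      · rw [if_neg h]
        have hpos : 0 < S.Dsum π x := lt_of_le_of_ne (S.Dsum_nonneg hπ x) (Ne.symm h)
        rw [Real.norm_eq_abs, abs_mul, abs_of_pos hpos]
        have hb := S.V_bounds N (S.ratio_mem hπ x h)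
        have habs : |S.V N fun i => S.D i π x / S.Dsum π x| ≤ S.Abnd :=
          abs_le.mpr ⟨by linarith [hb.1, S.Abnd_nonneg], hb.2⟩
        calc S.Dsum π x * |S.V N fun i => S.D i π x / S.Dsum π x|
            ≤ S.Dsum π x * S.Abnd := mul_le_mul_of_nonneg_left habs hpos.le
          _ = S.Abnd * S.Dsum π x := mul_comm _ _
    · by_cases h : S.Dsum π x = 0
      · simp [h]
      · simp only [if_neg h]
        exact tendsto_const_nhds.mul (hV0 _ (S.ratio_mem hπ x h))
  have h1 : Tendsto (fun N => S.V (N+1) π) atTop (nhds (V0 π)) :=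
    (hV0 π hπ).comp (tendsto_add_atTop_nat 1)
  have h2 : Tendsto (fun N => S.V (N+1) π) atTop
      (nhds (min (S.hmin π) (S.c * (1 - π 0) + S.T V0 π))) := by
    simp only [S.V_succ]
    exact tendsto_const_nhds.min (tendsto_const_nhds.add hT)
  have hEq := tendsto_nhds_unique h1 h2
  exact ⟨hEq, hEq⟩
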